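/- arXiv:2303.05458 — 2 statements merged into one kernel-verified Lean document; each statement's English description precedes it below -/
import Mathlib

section
/- Consider the 2-dimensional affine-Gaussian transition with state (v, p): under action a, v' = v + Δv(a) + g(a)·ε_v and p' = p + v'·Δt + ε_p, where ε_v ∼ N(0, σ_v²) and ε_p ∼ N(0, σ_p²) are independent. Let V(v,p) = c·v·p with c > 0, and suppose Δv(a₁) > Δv(a₀) and g(a₁)² > g(a₀)². Then E[V(v',p') | a₁] − E[V(v',p') | a₀] > 0 if and only if p/Δt + 2v + Δv(a₁) + Δv(a₀) + σ_v² (g(a₁)² − g(a₀)²)/(Δv(a₁) − Δv(a₀)) > 0, where the expectation is under the true joint distribution of (v', p'). -/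
open MeasureTheory ProbabilityTheory Real
open scoped NNReal ENNReal

namespace TrueModelAux

lemma integral_id_mul_exp (b : ℝ) : ∫ x : ℝ, x * rexp (-b * x ^ 2) = 0 := by
  simp only [neg_mul]
  have h := integral_neg_eq_self (fun x : ℝ => x * rexp (-(b * x ^ 2))) (volume : Measure ℝ)
  simp only [neg_sq, neg_mul] at h
  rw [integral_neg] at h
  linarith

lemma rpow_two_eq (x : ℝ) : x ^ (2 : ℝ) = x ^ 2 := by
  rw [show (2 : ℝ) = ((2 : ℕ) : ℝ) by norm_num, Real.rpow_natCast]

lemma integral_sq_mul_exp {b : ℝ} (hb : 0 < b) :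
    ∫ x : ℝ, x ^ 2 * rexp (-b * x ^ 2) = Real.sqrt π / (2 * b * Real.sqrt b) := by
  have hsb : 0 < Real.sqrt b := Real.sqrt_pos.mpr hb
  have h1 : ∫ x : ℝ, x ^ 2 * rexp (-b * x ^ 2)
      = 2 * ∫ x in Set.Ioi (0 : ℝ), x ^ 2 * rexp (-b * x ^ 2) := by
    rw [← integral_comp_abs (f := fun x => x ^ 2 * rexp (-b * x ^ 2))]
    congr 1 with x
    rw [sq_abs]
  have h2 : ∫ x in Set.Ioi (0 : ℝ), x ^ (2 : ℝ) * rexp (-b * x ^ (2 : ℝ))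
      = b ^ (-((2 : ℝ) + 1) / 2) * (1 / 2) * Real.Gamma (((2 : ℝ) + 1) / 2) :=
    integral_rpow_mul_exp_neg_mul_rpow (by norm_num) (by norm_num) hb
  simp only [rpow_two_eq] at h2
  have hG : Real.Gamma (((2 : ℝ) + 1) / 2) = Real.sqrt π / 2 := by
    rw [show ((2 : ℝ) + 1) / 2 = 1 / 2 + 1 by norm_num,
      Real.Gamma_add_one (by norm_num), Real.Gamma_one_half_eq]
    ring
  have hbpow : b ^ (-((2 : ℝ) + 1) / 2) = (b * Real.sqrt b)⁻¹ := by
    rw [show (-((2 : ℝ) + 1) / 2) = -(1 + 1 / 2) by norm_num, Real.rpow_neg hb.le,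
      Real.rpow_add hb, Real.rpow_one, ← Real.sqrt_eq_rpow]
  rw [h1, h2, hG, hbpow]
  field_simp

variable {t : ℝ≥0}

lemma gaussianPDFReal_eq (t : ℝ≥0) (x : ℝ) :
    gaussianPDFReal 0 t x = (Real.sqrt (2 * π * t))⁻¹ * rexp (-(2 * (t : ℝ))⁻¹ * x ^ 2) := by
  rw [gaussianPDFReal]
  congr 1
  rw [sub_zero]
  ring

lemma integral_gaussianReal' (ht : t ≠ 0) (f : ℝ → ℝ) :
    ∫ x, f x ∂(gaussianReal 0 t) = ∫ x, gaussianPDFReal 0 t x * f x := by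
  rw [gaussianReal_of_var_ne_zero _ ht]
  have hpdf : gaussianPDF 0 t = fun x => ((gaussianPDFReal 0 t x).toNNReal : ℝ≥0∞) := rfl
  rw [hpdf, integral_withDensity_eq_integral_smul (measurable_gaussianPDFReal 0 t).real_toNNReal f]
  congr 1 with x
  simp [NNReal.smul_def, Real.coe_toNNReal _ (gaussianPDFReal_nonneg 0 t x)]

lemma integrable_gaussianReal_iff (ht : t ≠ 0) (f : ℝ → ℝ) :
    Integrable f (gaussianReal 0 t)
      ↔ Integrable (fun x => gaussianPDFReal 0 t x * f x) volume := by
  rw [gaussianReal_of_var_ne_zero _ ht]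
  have hpdf : gaussianPDF 0 t = fun x => ((gaussianPDFReal 0 t x).toNNReal : ℝ≥0∞) := rfl
  rw [hpdf, integrable_withDensity_iff_integrable_smul
    (measurable_gaussianPDFReal 0 t).real_toNNReal]
  constructor <;> intro h <;> refine h.congr (ae_of_all _ fun x => ?_) <;>
    simp [NNReal.smul_def, Real.coe_toNNReal _ (gaussianPDFReal_nonneg 0 t x)]

lemma t_pos (ht : t ≠ 0) : (0 : ℝ) < t := by
  exact_mod_cast pos_iff_ne_zero.mpr ht

lemma integrable_id_gaussian (t : ℝ≥0) : Integrable (fun y : ℝ => y) (gaussianReal 0 t) := by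
  by_cases ht : t = 0
  · subst ht
    rw [gaussianReal_zero_var]
    refine ⟨measurable_id.aestronglyMeasurable, ?_⟩
    simp [HasFiniteIntegral, lintegral_dirac]
  · have hb : 0 < (2 * (t : ℝ))⁻¹ := by have := t_pos ht; positivity
    rw [integrable_gaussianReal_iff ht]
    have : (fun x => gaussianPDFReal 0 t x * x)
        = fun x => (Real.sqrt (2 * π * t))⁻¹ * (x * rexp (-(2 * (t : ℝ))⁻¹ * x ^ 2)) := by
      funext x; rw [gaussianPDFReal_eq]; ring
    rw [this]
    exact (integrable_mul_exp_neg_mul_sq hb).const_mul _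

lemma integrable_sq_gaussian (ht : t ≠ 0) :
    Integrable (fun y : ℝ => y ^ 2) (gaussianReal 0 t) := by
  have hb : 0 < (2 * (t : ℝ))⁻¹ := by have := t_pos ht; positivity
  rw [integrable_gaussianReal_iff ht]
  have : (fun x => gaussianPDFReal 0 t x * x ^ 2)
      = fun x => (Real.sqrt (2 * π * t))⁻¹ * (x ^ 2 * rexp (-(2 * (t : ℝ))⁻¹ * x ^ 2)) := by
    funext x; rw [gaussianPDFReal_eq]; ring
  rw [this]
  refine Integrable.const_mul ?_ _
  have h := integrable_rpow_mul_exp_neg_mul_sq hb (s := 2) (by norm_num)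
  simpa only [rpow_two_eq] using h

lemma integral_id_gaussian (t : ℝ≥0) : ∫ y : ℝ, y ∂(gaussianReal 0 t) = 0 := by
  by_cases ht : t = 0
  · subst ht
    rw [gaussianReal_zero_var, integral_dirac]
  · rw [integral_gaussianReal' ht]
    have : (fun x => gaussianPDFReal 0 t x * x)
        = fun x => (Real.sqrt (2 * π * t))⁻¹ * (x * rexp (-(2 * (t : ℝ))⁻¹ * x ^ 2)) := by
      funext x; rw [gaussianPDFReal_eq]; ring
    rw [this, integral_const_mul, integral_id_mul_exp, mul_zero]

lemma integral_sq_gaussian (ht : t ≠ 0) :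
    ∫ y : ℝ, y ^ 2 ∂(gaussianReal 0 t) = t := by
  have htp := t_pos ht
  have hb : 0 < (2 * (t : ℝ))⁻¹ := by positivity
  rw [integral_gaussianReal' ht]
  have : (fun x => gaussianPDFReal 0 t x * x ^ 2)
      = fun x => (Real.sqrt (2 * π * t))⁻¹ * (x ^ 2 * rexp (-(2 * (t : ℝ))⁻¹ * x ^ 2)) := by
    funext x; rw [gaussianPDFReal_eq]; ring
  rw [this, integral_const_mul, integral_sq_mul_exp hb]
  have hs : (0 : ℝ) < Real.sqrt (2 * t) := Real.sqrt_pos.mpr (by positivity)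
  have hs2 : Real.sqrt (2 * (t : ℝ)) ^ 2 = 2 * (t : ℝ) := Real.sq_sqrt (by positivity)
  have hsp : (0 : ℝ) < Real.sqrt π := Real.sqrt_pos.mpr pi_pos
  have h2pt : Real.sqrt (2 * π * (t : ℝ)) = Real.sqrt π * Real.sqrt (2 * t) := by
    rw [show 2 * π * (t : ℝ) = π * (2 * t) by ring, Real.sqrt_mul pi_pos.le]
  have hsinv : Real.sqrt ((2 * (t : ℝ))⁻¹) = (Real.sqrt (2 * t))⁻¹ := Real.sqrt_inv _
  rw [h2pt, hsinv]
  set s := Real.sqrt (2 * (t : ℝ)) with hsdef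
  have hts : (t : ℝ) = s ^ 2 / 2 := by rw [hs2]; ring
  rw [hts]
  field_simp

lemma integrable_poly_gaussian (ht : t ≠ 0) (k0 k1 k2 : ℝ) :
    Integrable (fun x : ℝ => k0 + k1 * x + k2 * x ^ 2) (gaussianReal 0 t) :=
  (((integrable_const k0).add ((integrable_id_gaussian t).const_mul k1)).add
    ((integrable_sq_gaussian ht).const_mul k2))

lemma integral_poly_gaussian (ht : t ≠ 0) (k0 k1 k2 : ℝ) :
    ∫ x : ℝ, (k0 + k1 * x + k2 * x ^ 2) ∂(gaussianReal 0 t) = k0 + k2 * t := by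
  have h1a : Integrable (fun x : ℝ => k1 * x) (gaussianReal 0 t) :=
    (integrable_id_gaussian t).const_mul k1
  have h1 : Integrable (fun x : ℝ => k0 + k1 * x) (gaussianReal 0 t) :=
    (integrable_const k0).add h1a
  have h2 : Integrable (fun x : ℝ => k2 * x ^ 2) (gaussianReal 0 t) :=
    (integrable_sq_gaussian ht).const_mul k2
  rw [integral_add h1 h2, integral_add (integrable_const k0) h1a,
    integral_const, integral_const_mul, integral_const_mul, integral_id_gaussian,
    integral_sq_gaussian ht]
  simp

end TrueModelAux

open TrueModelAux in
/-- in the 1-D Driving model, with V(v,p) = c·v·p, the true-model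
expected next value is higher under a₁ than a₀ iff
p/Δt + 2v + Δv(a₁) + Δv(a₀) + σ_v²(g(a₁)² − g(a₀)²)/(Δv(a₁) − Δv(a₀)) > 0.
The expectation is over the joint distribution of (ε_v, ε_p), two independent
centered Gaussians with variances σ_v², σ_p², with v' = v + Δv(a) + g(a)ε_v and
p' = p + v'Δt + ε_p. -/
theorem true_model_value_comparison
    (v p c Δt σv σp : ℝ) (dv g : Fin 2 → ℝ)
    (hc : 0 < c) (hΔt : 0 < Δt) (hσv : 0 < σv)
    (hdv : dv 0 < dv 1) (hg : (g 0) ^ 2 < (g 1) ^ 2) :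
    (letI EV : Fin 2 → ℝ := fun a =>
      ∫ e : ℝ × ℝ,
        c * (v + dv a + g a * e.1) * (p + (v + dv a + g a * e.1) * Δt + e.2)
        ∂((gaussianReal 0 (σv ^ 2).toNNReal).prod (gaussianReal 0 (σp ^ 2).toNNReal))
    0 < EV 1 - EV 0) ↔
      0 < p / Δt + 2 * v + dv 1 + dv 0 +
        σv ^ 2 * ((g 1) ^ 2 - (g 0) ^ 2) / (dv 1 - dv 0) := by
  have hσv2 : (((σv ^ 2).toNNReal : ℝ≥0) : ℝ) = σv ^ 2 := Real.coe_toNNReal _ (sq_nonneg σv)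
  have ht1 : (σv ^ 2).toNNReal ≠ 0 := (Real.toNNReal_pos.mpr (by positivity)).ne'
  have key : ∀ a : Fin 2,
      (∫ e : ℝ × ℝ,
          c * (v + dv a + g a * e.1) * (p + (v + dv a + g a * e.1) * Δt + e.2)
          ∂((gaussianReal 0 (σv ^ 2).toNNReal).prod (gaussianReal 0 (σp ^ 2).toNNReal)))
        = c * (v + dv a) * (p + (v + dv a) * Δt) + c * (g a) ^ 2 * Δt * σv ^ 2 := by
    intro a
    set P : ℝ → ℝ := fun x =>
      c * (v + dv a) * (p + (v + dv a) * Δt)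
        + (c * g a * (p + (v + dv a) * Δt) + c * (v + dv a) * g a * Δt) * x
        + c * (g a) ^ 2 * Δt * x ^ 2 with hP
    set Q : ℝ → ℝ := fun x => c * (v + dv a) + c * g a * x + (0 : ℝ) * x ^ 2 with hQ
    set one : ℝ → ℝ := fun _ => (1 : ℝ) with hone
    set idf : ℝ → ℝ := fun y => y with hidf
    have hPint : Integrable P (gaussianReal 0 (σv ^ 2).toNNReal) :=
      integrable_poly_gaussian ht1 _ _ _
    have hQint : Integrable Q (gaussianReal 0 (σv ^ 2).toNNReal) :=
      integrable_poly_gaussian ht1 _ _ _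
    have honeint : Integrable one (gaussianReal 0 (σp ^ 2).toNNReal) := integrable_const 1
    have hidint : Integrable idf (gaussianReal 0 (σp ^ 2).toNNReal) :=
      integrable_id_gaussian _
    have hfun : (fun e : ℝ × ℝ =>
          c * (v + dv a + g a * e.1) * (p + (v + dv a + g a * e.1) * Δt + e.2))
        = fun e : ℝ × ℝ => P e.1 * one e.2 + Q e.1 * idf e.2 := by
      simp only [hP, hQ, hone, hidf]
      funext e
      ring
    rw [hfun, integral_add (hPint.mul_prod honeint) (hQint.mul_prod hidint),
      integral_prod_mul, integral_prod_mul]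
    simp only [hP, hQ, hone, hidf]
    rw [integral_poly_gaussian ht1, integral_poly_gaussian ht1, integral_id_gaussian,
      integral_const]
    simp only [measure_univ, probReal_univ, ENNReal.toReal_one, smul_eq_mul, mul_one, mul_zero, zero_mul,
      add_zero, hσv2]
  show (0 <
      (∫ e : ℝ × ℝ,
        c * (v + dv 1 + g 1 * e.1) * (p + (v + dv 1 + g 1 * e.1) * Δt + e.2)
        ∂((gaussianReal 0 (σv ^ 2).toNNReal).prod (gaussianReal 0 (σp ^ 2).toNNReal)))
      - (∫ e : ℝ × ℝ,
        c * (v + dv 0 + g 0 * e.1) * (p + (v + dv 0 + g 0 * e.1) * Δt + e.2)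
        ∂((gaussianReal 0 (σv ^ 2).toNNReal).prod (gaussianReal 0 (σp ^ 2).toNNReal)))) ↔ _
  rw [key 1, key 0]
  have hd : 0 < dv 1 - dv 0 := sub_pos.mpr hdv
  have hKey : (c * (v + dv 1) * (p + (v + dv 1) * Δt) + c * (g 1) ^ 2 * Δt * σv ^ 2)
      - (c * (v + dv 0) * (p + (v + dv 0) * Δt) + c * (g 0) ^ 2 * Δt * σv ^ 2)
      = (c * Δt * (dv 1 - dv 0)) * (p / Δt + 2 * v + dv 1 + dv 0 +
          σv ^ 2 * ((g 1) ^ 2 - (g 0) ^ 2) / (dv 1 - dv 0)) := by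
    field_simp
    ring
  rw [hKey]
  have hpos : 0 < c * Δt * (dv 1 - dv 0) := by positivity
  constructor
  · intro h
    by_contra hS
    push_neg at hS
    nlinarith
  · intro h
    exact mul_pos hpos h
end

section
/- In the same 2-dimensional affine-Gaussian transition, let the 'lagged' model replace the joint distribution of (v', p') by the product of its marginals (same means and same per-coordinate variances, zero covariance). With V(v,p) = c·v·p, c > 0, and Δv(a₁) > Δv(a₀): the lagged-model expectation satisfies Ê[V(v',p') | a₁] − Ê[V(v',p') | a₀] > 0 if and only if p/Δt + 2v + Δv(a₁) + Δv(a₀) > 0. -/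
open MeasureTheory ProbabilityTheory Real

lemma gauss_integrable_id (w : NNReal) :
    Integrable (fun x : ℝ => x) (gaussianReal 0 w) := by
  rcases eq_or_ne w 0 with h | h
  · rw [h, gaussianReal_zero_var]
    refine ⟨measurable_id.aestronglyMeasurable, ?_⟩
    simp [HasFiniteIntegral, lintegral_dirac]
  · rw [gaussianReal_of_var_ne_zero _ h]
    rw [integrable_withDensity_iff (measurable_gaussianPDF 0 w)
      (Filter.Eventually.of_forall fun x => ENNReal.ofReal_lt_top)]
    have hw : (0:ℝ) < (w:ℝ) := by positivity
    have hb : (0:ℝ) < (2*(w:ℝ))⁻¹ := by positivity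
    have heq : (fun x : ℝ => x * (gaussianPDF 0 w x).toReal)
        = fun x : ℝ => (Real.sqrt (2*π*w))⁻¹ * (x * Real.exp (-(2*(w:ℝ))⁻¹ * x^2)) := by
      funext x
      rw [gaussianPDF, ENNReal.toReal_ofReal (gaussianPDFReal_nonneg 0 w x), gaussianPDFReal]
      have hexp : -(x-0)^2/(2*(w:ℝ)) = -(2*(w:ℝ))⁻¹*x^2 := by field_simp; ring
      rw [hexp]; ring
    rw [heq]
    exact ((integrable_mul_exp_neg_mul_sq hb).const_mul _)

lemma gauss_mean_zero (w : NNReal) : ∫ x, x ∂(gaussianReal 0 w) = 0 := by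
  have hmap : Measure.map (fun x : ℝ => -x) (gaussianReal 0 w) = gaussianReal 0 w := by
    rcases eq_or_ne w 0 with h | h
    · simp [h, gaussianReal_zero_var, Measure.map_dirac' (measurable_neg)]
    · have := gaussianReal_map_const_mul (μ := 0) (v := w) (-1 : ℝ)
      simpa [neg_one_mul] using this
  have h2 : ∫ x, x ∂(gaussianReal 0 w) = ∫ x, (-x) ∂(gaussianReal 0 w) := by
    conv_lhs => rw [← hmap]
    rw [integral_map (φ := fun x : ℝ => -x) (f := fun x : ℝ => x)
      measurable_neg.aemeasurable ((measurable_id' : Measurable fun x : ℝ => x).aestronglyMeasurable)]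
  rw [integral_neg] at h2
  linarith

/-- in the 1-D Driving model, the lagged model replaces the joint
distribution of (v',p') by the product of its marginals, so its expectation of
V(v,p) = c·v·p is the product of the marginal means: Ê[c v' p'] = c·E[v']·E[p'].
Then Ê[V|a₁] − Ê[V|a₀] > 0 iff p/Δt + 2v + Δv(a₁) + Δv(a₀) > 0. -/
theorem lagged_model_value_comparison
    (v p c Δt σv σp : ℝ) (dv g : Fin 2 → ℝ)
    (hc : 0 < c) (hΔt : 0 < Δt) (hσv : 0 < σv)
    (hdv : dv 0 < dv 1) :
    (letI noise := (gaussianReal 0 (σv ^ 2).toNNReal).prod (gaussianReal 0 (σp ^ 2).toNNReal)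
    letI EVhat : Fin 2 → ℝ := fun a =>
      c * (∫ e : ℝ × ℝ, (v + dv a + g a * e.1) ∂noise) *
        (∫ e : ℝ × ℝ, (p + (v + dv a + g a * e.1) * Δt + e.2) ∂noise)
    0 < EVhat 1 - EVhat 0) ↔
      0 < p / Δt + 2 * v + dv 1 + dv 0 := by
  set μ1 := gaussianReal 0 (σv ^ 2).toNNReal with hμ1
  set μ2 := gaussianReal 0 (σp ^ 2).toNNReal with hμ2
  have hmapf : Measure.map Prod.fst (μ1.prod μ2) = μ1 := by
    rw [Measure.map_fst_prod]; simp
  have hmaps : Measure.map Prod.snd (μ1.prod μ2) = μ2 := by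
    rw [Measure.map_snd_prod]; simp
  have hfst : Integrable (fun e : ℝ × ℝ => e.1) (μ1.prod μ2) := by
    have h := gauss_integrable_id (σv ^ 2).toNNReal
    rw [← hμ1, ← hmapf] at h
    exact (integrable_map_measure h.aestronglyMeasurable measurable_fst.aemeasurable).1 h
  have hsnd : Integrable (fun e : ℝ × ℝ => e.2) (μ1.prod μ2) := by
    have h := gauss_integrable_id (σp ^ 2).toNNReal
    rw [← hμ2, ← hmaps] at h
    exact (integrable_map_measure h.aestronglyMeasurable measurable_snd.aemeasurable).1 h
  have hI1 : ∫ e : ℝ × ℝ, e.1 ∂(μ1.prod μ2) = 0 := by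
    rw [← integral_map (f := fun x : ℝ => x) measurable_fst.aemeasurable
      ((measurable_id' : Measurable fun x : ℝ => x).aestronglyMeasurable), hmapf, hμ1,
      gauss_mean_zero]
  have hI2 : ∫ e : ℝ × ℝ, e.2 ∂(μ1.prod μ2) = 0 := by
    rw [← integral_map (f := fun x : ℝ => x) measurable_snd.aemeasurable
      ((measurable_id' : Measurable fun x : ℝ => x).aestronglyMeasurable), hmaps, hμ2,
      gauss_mean_zero]
  have hA : ∀ a : Fin 2, (∫ e : ℝ × ℝ, (v + dv a + g a * e.1) ∂(μ1.prod μ2)) = v + dv a := by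
    intro a
    have hg : Integrable (fun e : ℝ × ℝ => g a * e.1) (μ1.prod μ2) := hfst.const_mul _
    rw [integral_add (integrable_const _) hg, integral_const, integral_const_mul, hI1]
    simp
  have hB : ∀ a : Fin 2, (∫ e : ℝ × ℝ, (p + (v + dv a + g a * e.1) * Δt + e.2) ∂(μ1.prod μ2))
      = p + (v + dv a) * Δt := by
    intro a
    have heq : (fun e : ℝ × ℝ => p + (v + dv a + g a * e.1) * Δt + e.2)
        = fun e : ℝ × ℝ => (p + (v + dv a) * Δt + (g a * Δt) * e.1) + e.2 := by
      funext e; ring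
    have hg : Integrable (fun e : ℝ × ℝ => (g a * Δt) * e.1) (μ1.prod μ2) := hfst.const_mul _
    have hg2 : Integrable (fun e : ℝ × ℝ => p + (v + dv a) * Δt + (g a * Δt) * e.1)
        (μ1.prod μ2) := (integrable_const _).add hg
    rw [heq, integral_add hg2 hsnd, integral_add (integrable_const _) hg, integral_const,
      integral_const_mul, hI1, hI2]
    simp
  show (0 < c * (∫ e : ℝ × ℝ, (v + dv 1 + g 1 * e.1) ∂(μ1.prod μ2)) *
        (∫ e : ℝ × ℝ, (p + (v + dv 1 + g 1 * e.1) * Δt + e.2) ∂(μ1.prod μ2)) -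
      c * (∫ e : ℝ × ℝ, (v + dv 0 + g 0 * e.1) ∂(μ1.prod μ2)) *
        (∫ e : ℝ × ℝ, (p + (v + dv 0 + g 0 * e.1) * Δt + e.2) ∂(μ1.prod μ2))) ↔
      0 < p / Δt + 2 * v + dv 1 + dv 0
  rw [hA 0, hA 1, hB 0, hB 1]
  have hcd : 0 < c * (dv 1 - dv 0) := mul_pos hc (sub_pos.2 hdv)
  have hdiff : c * (v + dv 1) * (p + (v + dv 1) * Δt) - c * (v + dv 0) * (p + (v + dv 0) * Δt)
      = c * (dv 1 - dv 0) * (p + Δt * (2 * v + dv 1 + dv 0)) := by ring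
  rw [hdiff, mul_pos_iff_of_pos_left hcd]
  have hq : p / Δt + 2 * v + dv 1 + dv 0 = (p + Δt * (2 * v + dv 1 + dv 0)) / Δt := by
    field_simp
    ring
  rw [hq]
  exact (div_pos_iff_of_pos_right hΔt).symm
end
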